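/- A continuous bounded function f : I → X is almost periodic if and only if it is Stepanov ∞-almost periodic, i.e., AP(I:X) = APS^∞(I:X) ∩ C(I:X). -/

import Mathlib

open MeasureTheory Set ENNReal Real
noncomputable section

/-- The Young-type function `φ_{p}(t)`: `t^p` for `p < ∞`, and `0` for `t ≤ 1`, `∞` for `t > 1`
when `p = ∞`. -/
def phiVar (p : ℝ≥0∞) (t : ℝ) : ℝ≥0∞ :=
  if p = ⊤ then (if t ≤ 1 then 0 else ⊤) else ENNReal.ofReal (t ^ p.toReal)

/-- The modular `ρ(g) = ∫_Ω φ_{p(x)}(g(x)) dx` of a nonnegative function `g`. -/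
def rhoVar (p : ℝ → ℝ≥0∞) (Ω : Set ℝ) (g : ℝ → ℝ) : ℝ≥0∞ :=
  ∫⁻ x in Ω, phiVar (p x) (g x)

/-- The Luxemburg norm of `f` on `Ω` with variable exponent `p`. -/
def luxNorm {X : Type*} [NormedAddCommGroup X] (p : ℝ → ℝ≥0∞) (Ω : Set ℝ) (f : ℝ → X) : ℝ :=
  sInf {lam : ℝ | 0 < lam ∧ rhoVar p Ω (fun x => ‖f x‖ / lam) ≤ 1}

/-- Membership in the variable-exponent Lebesgue space `L^{p(x)}(Ω : X)`. -/
def MemLvar {X : Type*} [NormedAddCommGroup X] (p : ℝ → ℝ≥0∞) (Ω : Set ℝ) (f : ℝ → X) : Prop :=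
  AEStronglyMeasurable f (volume.restrict Ω) ∧
    ∃ lam > 0, rhoVar p Ω (fun x => lam * ‖f x‖) < ⊤

/-- Stepanov `p(x)`-boundedness: all translates lie in `L^{p(x)}([0,1]:X)` with uniformly
bounded Luxemburg norms. -/
def StepanovBounded {X : Type*} [NormedAddCommGroup X] (p : ℝ → ℝ≥0∞) (I : Set ℝ)
    (f : ℝ → X) : Prop :=
  (∀ t ∈ I, MemLvar p (Icc 0 1) (fun s => f (t + s))) ∧
    ∃ C : ℝ, ∀ t ∈ I, luxNorm p (Icc 0 1) (fun s => f (t + s)) ≤ C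

/-- The Stepanov `p(x)`-norm `sup_{t ∈ I} ‖f(t+·)‖_{L^{p(x)}[0,1]}`. -/
def stepNorm {X : Type*} [NormedAddCommGroup X] (p : ℝ → ℝ≥0∞) (I : Set ℝ) (f : ℝ → X) : ℝ :=
  sSup ((fun t => luxNorm p (Icc 0 1) (fun s => f (t + s))) '' I)

/-- `S` is relatively dense in `I`: there is `l > 0` such that every subinterval of `I` of
length `l` meets `S`. -/
def RelDenseIn (I S : Set ℝ) : Prop :=
  ∃ l > 0, ∀ a : ℝ, Icc a (a + l) ⊆ I → (S ∩ Icc a (a + l)).Nonempty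

/-- Bohr almost periodicity of `f : I → X`. -/
def AlmostPeriodicOn {X : Type*} [NormedAddCommGroup X] (I : Set ℝ) (f : ℝ → X) : Prop :=
  ContinuousOn f I ∧
    ∀ ε > 0, RelDenseIn I {τ | 0 < τ ∧ ∀ t ∈ I, ‖f (t + τ) - f t‖ ≤ ε}

/-- Stepanov `p(x)`-almost periodicity: the map `t ↦ f(t+·)` into `L^{p(x)}([0,1]:X)` is
well defined, continuous and almost periodic. -/
def StepanovAP {X : Type*} [NormedAddCommGroup X] (p : ℝ → ℝ≥0∞) (I : Set ℝ) (f : ℝ → X) : Prop :=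
  (∀ t ∈ I, MemLvar p (Icc 0 1) (fun s => f (t + s))) ∧
  (∀ t ∈ I, ∀ ε > 0, ∃ δ > 0, ∀ t' ∈ I, |t' - t| < δ →
      luxNorm p (Icc 0 1) (fun s => f (t' + s) - f (t + s)) ≤ ε) ∧
  (∀ ε > 0, RelDenseIn I
      {τ | 0 < τ ∧ ∀ t ∈ I, luxNorm p (Icc 0 1) (fun s => f (t + τ + s) - f (t + s)) ≤ ε})

lemma phiTop_mono : Monotone (phiVar ⊤) := by
  intro u v huv
  unfold phiVar
  rw [if_pos rfl, if_pos rfl]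
  by_cases hv : v ≤ 1
  · rw [if_pos (huv.trans hv), if_pos hv]
  · rw [if_neg hv]; exact le_top

lemma rhoTop_le_one_of (g : ℝ → ℝ) (h : ∀ x ∈ Icc (0:ℝ) 1, g x ≤ 1) :
    rhoVar (fun _ => ⊤) (Icc 0 1) g ≤ 1 := by
  have hae : ∀ᵐ x ∂(volume.restrict (Icc (0:ℝ) 1)), phiVar ⊤ (g x) = 0 := by
    filter_upwards [ae_restrict_mem measurableSet_Icc] with x hx
    simp [phiVar, h x hx]
  have : rhoVar (fun _ => ⊤) (Icc 0 1) g = 0 := by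
    rw [rhoVar]
    exact le_antisymm (by rw [lintegral_congr_ae hae]; simp) zero_le
  simp [this]

lemma luxNorm_top_le {X : Type*} [NormedAddCommGroup X] (f : ℝ → X) (ε : ℝ) (hε : 0 < ε)
    (h : ∀ s ∈ Icc (0:ℝ) 1, ‖f s‖ ≤ ε) : luxNorm (fun _ => ⊤) (Icc 0 1) f ≤ ε := by
  apply csInf_le ⟨0, fun x hx => hx.1.le⟩
  refine ⟨hε, rhoTop_le_one_of _ fun x hx => ?_⟩
  rw [div_le_one hε]; exact h x hx

lemma norm_le_of_lux {X : Type*} [NormedAddCommGroup X] (h : ℝ → X)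
    (hc : ContinuousOn h (Icc 0 1)) (M : ℝ) (hM : ∀ s ∈ Icc (0:ℝ) 1, ‖h s‖ ≤ M)
    {ε : ℝ} (hε : 0 ≤ ε) (hlux : luxNorm (fun _ => ⊤) (Icc 0 1) h ≤ ε) :
    ∀ s ∈ Icc (0:ℝ) 1, ‖h s‖ ≤ ε := by
  intro s hs
  refine le_of_forall_gt_imp_ge_of_dense fun lam hlam => ?_
  have hlam0 : 0 < lam := lt_of_le_of_lt hε hlam
  set S := {l : ℝ | 0 < l ∧ rhoVar (fun _ => ⊤) (Icc 0 1) (fun x => ‖h x‖ / l) ≤ 1} with hS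
  have hbdd : BddBelow S := ⟨0, fun x hx => hx.1.le⟩
  have hne : S.Nonempty := by
    refine ⟨max M 0 + 1, by positivity, rhoTop_le_one_of _ fun x hx => ?_⟩
    rw [div_le_one (by positivity)]
    calc ‖h x‖ ≤ M := hM x hx
      _ ≤ max M 0 + 1 := by linarith [le_max_left M 0]
  obtain ⟨a, haS, halam⟩ := (csInf_lt_iff hbdd hne).mp (lt_of_le_of_lt hlux hlam)
  have hrho : rhoVar (fun _ => ⊤) (Icc 0 1) (fun x => ‖h x‖ / lam) ≤ 1 := by
    refine le_trans (lintegral_mono fun x => phiTop_mono ?_) haS.2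
    exact div_le_div_of_nonneg_left (norm_nonneg _) haS.1 halam.le
  -- now show ‖h s‖ ≤ lam by contradiction
  by_contra hcon
  push_neg at hcon
  have hct : ContinuousWithinAt (fun x => ‖h x‖) (Icc 0 1) s := (hc s hs).norm
  have hev : ∀ᶠ x in nhdsWithin s (Icc 0 1), lam < ‖h x‖ :=
    hct.eventually (eventually_gt_nhds hcon)
  obtain ⟨δ, hδ, hball⟩ := Metric.mem_nhdsWithin_iff.mp hev
  set c := max (s - δ/2) 0 with hc'
  set d := min (s + δ/2) 1 with hd'
  have hcd : c < d := by
    apply max_lt <;> apply lt_min <;> [linarith; linarith [hs.2]; linarith [hs.1]; linarith]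
  have hsub : Ioo c d ⊆ Metric.ball s δ ∩ Icc 0 1 := by
    intro x hx
    have h1 : s - δ/2 < x := lt_of_le_of_lt (le_max_left _ _) hx.1
    have h2 : x < s + δ/2 := lt_of_lt_of_le hx.2 (min_le_left _ _)
    have h3 : 0 < x := lt_of_le_of_lt (le_max_right _ _) hx.1
    have h4 : x < 1 → True := fun _ => trivial
    refine ⟨?_, h3.le, (lt_of_lt_of_le hx.2 (min_le_right _ _)).le⟩
    rw [Metric.mem_ball, Real.dist_eq, abs_lt]; constructor <;> linarith
  have hIccsub : Ioo c d ⊆ Icc (0:ℝ) 1 := fun x hx => (hsub hx).2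
  have hbig : (⊤ : ℝ≥0∞) * volume (Ioo c d) ≤
      rhoVar (fun _ => ⊤) (Icc 0 1) (fun x => ‖h x‖ / lam) := by
    rw [rhoVar]
    calc (⊤ : ℝ≥0∞) * volume (Ioo c d)
        = ∫⁻ x in Icc (0:ℝ) 1, (Ioo c d).indicator (fun _ => (⊤:ℝ≥0∞)) x := by
          rw [lintegral_indicator measurableSet_Ioo, setLIntegral_const,
            Measure.restrict_apply measurableSet_Ioo,
            inter_eq_self_of_subset_left hIccsub, mul_comm]
      _ ≤ ∫⁻ x in Icc (0:ℝ) 1, phiVar ⊤ (‖h x‖ / lam) := by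
          apply lintegral_mono fun x => ?_
          by_cases hx : x ∈ Ioo c d
          · rw [Set.indicator_of_mem hx]
            have hxb := hball (hsub hx)
            have : ¬ (‖h x‖ / lam ≤ 1) := by
              rw [not_le, lt_div_iff₀ hlam0, one_mul]; exact hxb
            simp [phiVar, this]
          · rw [Set.indicator_of_notMem hx]; exact zero_le
  have hvol : volume (Ioo c d) ≠ 0 := by
    rw [Real.volume_Ioo]
    simpa using sub_pos.mpr hcd
  rw [ENNReal.top_mul hvol] at hbig
  exact absurd (hbig.trans hrho) (by simp)

theorem stmt13 {X : Type*} [NormedAddCommGroup X]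
    (I : Set ℝ) (hI : I = univ ∨ I = Ici 0)
    (f : ℝ → X) (hcont : ContinuousOn f I) (hbd : ∃ C, ∀ t ∈ I, ‖f t‖ ≤ C) :
    AlmostPeriodicOn I f ↔ StepanovAP (fun _ => ⊤) I f := by
  obtain ⟨C, hC⟩ := hbd
  set B := max C 0 with hB
  have hB0 : (0:ℝ) ≤ B := le_max_right _ _
  have hfB : ∀ t ∈ I, ‖f t‖ ≤ B := fun t ht => (hC t ht).trans (le_max_left _ _)
  have hmemI : ∀ t ∈ I, ∀ s : ℝ, 0 ≤ s → t + s ∈ I := by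
    rcases hI with h | h <;> subst h
    · intro t _ s _; trivial
    · intro t ht s hs; exact add_nonneg ht hs
  have hclosed : IsClosed I := by
    rcases hI with h | h <;> subst h
    · exact isClosed_univ
    · exact isClosed_Ici
  have hshiftcont : ∀ t ∈ I, ContinuousOn (fun s => f (t + s)) (Icc 0 1) := by
    intro t ht
    apply hcont.comp (continuous_const.add continuous_id).continuousOn
    intro s hs; exact hmemI t ht s hs.1
  constructor
  · rintro ⟨-, hap⟩
    refine ⟨?_, ?_, ?_⟩
    · intro t ht
      refine ⟨(hshiftcont t ht).aestronglyMeasurable measurableSet_Icc,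
        1/(B+1), by positivity, ?_⟩
      refine lt_of_le_of_lt (rhoTop_le_one_of _ fun x hx => ?_) one_lt_top
      have hfx := hfB (t+x) (hmemI t ht x hx.1)
      rw [div_mul_eq_mul_div, div_le_one (by positivity), one_mul]
      linarith
    · intro t ht ε hε
      have hK : IsCompact (I ∩ Icc (t-1) (t+2)) := isCompact_Icc.inter_left hclosed
      have hucont : UniformContinuousOn f (I ∩ Icc (t-1) (t+2)) :=
        hK.uniformContinuousOn_of_continuous (hcont.mono inter_subset_left)
      rw [Metric.uniformContinuousOn_iff] at hucont
      obtain ⟨δ, hδ, hδ'⟩ := hucont ε hε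
      refine ⟨min δ 1, by positivity, fun t' ht' hdist => ?_⟩
      apply luxNorm_top_le _ _ hε
      intro s hs
      have hd1 := lt_of_lt_of_le hdist (min_le_right _ _)
      have hd2 := lt_of_lt_of_le hdist (min_le_left _ _)
      obtain ⟨ha, hb⟩ := abs_lt.mp hd1
      have h1 : t + s ∈ I ∩ Icc (t-1) (t+2) :=
        ⟨hmemI t ht s hs.1, by constructor <;> linarith [hs.1, hs.2]⟩
      have h2 : t' + s ∈ I ∩ Icc (t-1) (t+2) :=
        ⟨hmemI t' ht' s hs.1, by constructor <;> linarith [hs.1, hs.2]⟩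
      have hdd : dist (t' + s) (t + s) < δ := by
        rw [Real.dist_eq, show t' + s - (t + s) = t' - t by ring]; exact hd2
      have := hδ' _ h2 _ h1 hdd
      rw [← dist_eq_norm]
      exact this.le
    · intro ε hε
      obtain ⟨l, hl, hrel⟩ := hap ε hε
      refine ⟨l, hl, fun a ha => ?_⟩
      obtain ⟨τ, hτ, hτI⟩ := hrel a ha
      refine ⟨τ, ⟨hτ.1, fun t ht => ?_⟩, hτI⟩
      apply luxNorm_top_le _ _ hε
      intro s hs
      rw [show t + τ + s = (t + s) + τ by ring]
      exact hτ.2 (t+s) (hmemI t ht s hs.1)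
  · rintro ⟨-, -, hap⟩
    refine ⟨hcont, fun ε hε => ?_⟩
    obtain ⟨l, hl, hrel⟩ := hap ε hε
    refine ⟨l, hl, fun a ha => ?_⟩
    obtain ⟨τ, ⟨hτ0, hτ⟩, hτI⟩ := hrel a ha
    refine ⟨τ, ⟨hτ0, fun t ht => ?_⟩, hτI⟩
    have htτ : t + τ ∈ I := hmemI t ht τ hτ0.le
    have hc2 : ContinuousOn (fun s => f (t + τ + s) - f (t + s)) (Icc 0 1) :=
      (hshiftcont (t+τ) htτ).sub (hshiftcont t ht)
    have hM : ∀ s ∈ Icc (0:ℝ) 1, ‖f (t + τ + s) - f (t + s)‖ ≤ B + B := fun s hs =>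
      calc ‖f (t+τ+s) - f (t+s)‖ ≤ ‖f (t+τ+s)‖ + ‖f (t+s)‖ := norm_sub_le _ _
        _ ≤ B + B := add_le_add (hfB _ (hmemI (t+τ) htτ s hs.1)) (hfB _ (hmemI t ht s hs.1))
    have := norm_le_of_lux _ hc2 (B+B) hM hε.le (hτ t ht) 0 ⟨le_refl 0, zero_le_one⟩
    simpa using this
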